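/- Let a < b, τ > 0, let Σ be a nonempty finite index set with weights ω_p > 0 and predicted values ũ_p ∈ ℝ for p ∈ Σ, and let m ∈ ℝ. If ξ₁, ξ₂ ∈ ℝ are both roots of F, i.e. F(ξ₁) = F(ξ₂) = 0 where F(ξ) = Σ_{p∈Σ} ω_p·cutoff(ũ_p + τξ) − m, then cutoff(ũ_p + τξ₁) = cutoff(ũ_p + τξ₂) for every p ∈ Σ; that is, although the Lagrange multiplier ξ may be non-unique, the corrected nodal values are uniquely determined. -/

import Mathlib

lemma stmt_5_aux {ι : Type*} (a b τ m : ℝ) (hτ : 0 < τ)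
    (S : Finset ι) (ω : ι → ℝ) (hω : ∀ p ∈ S, 0 < ω p)
    (uPred : ι → ℝ) (ξ₁ ξ₂ : ℝ) (hle : ξ₁ ≤ ξ₂)
    (h1 : (∑ p ∈ S, ω p * max a (min b (uPred p + τ * ξ₁))) - m = 0)
    (h2 : (∑ p ∈ S, ω p * max a (min b (uPred p + τ * ξ₂))) - m = 0) :
    ∀ p ∈ S, max a (min b (uPred p + τ * ξ₁)) = max a (min b (uPred p + τ * ξ₂)) := by
  have hsum : (∑ p ∈ S, ω p * max a (min b (uPred p + τ * ξ₁)))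
      = ∑ p ∈ S, ω p * max a (min b (uPred p + τ * ξ₂)) := by linarith
  have hterm : ∀ p ∈ S, ω p * max a (min b (uPred p + τ * ξ₁))
      ≤ ω p * max a (min b (uPred p + τ * ξ₂)) := by
    intro p hp
    have : uPred p + τ * ξ₁ ≤ uPred p + τ * ξ₂ := by nlinarith
    exact mul_le_mul_of_nonneg_left
      (max_le_max le_rfl (min_le_min le_rfl this)) (hω p hp).le
  have := (Finset.sum_eq_sum_iff_of_le hterm).mp hsum
  intro p hp
  have h := this p hp
  have := (hω p hp).ne'
  field_simp at h
  exact h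
lemma stmt_5_aux' {ι : Type*} (a b τ m : ℝ) (hτ : 0 < τ)
    (S : Finset ι) (ω : ι → ℝ) (hω : ∀ p ∈ S, 0 < ω p)
    (uPred : ι → ℝ) (ξ₁ ξ₂ : ℝ)
    (h1 : (∑ p ∈ S, ω p * max a (min b (uPred p + τ * ξ₁))) - m = 0)
    (h2 : (∑ p ∈ S, ω p * max a (min b (uPred p + τ * ξ₂))) - m = 0) :
    ∀ p ∈ S, max a (min b (uPred p + τ * ξ₁)) = max a (min b (uPred p + τ * ξ₂)) := by
  rcases le_total ξ₁ ξ₂ with h | h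
  · exact stmt_5_aux a b τ m hτ S ω hω uPred ξ₁ ξ₂ h h1 h2
  · intro p hp
    exact (stmt_5_aux a b τ m hτ S ω hω uPred ξ₂ ξ₁ h h2 h1 p hp).symm

/-- Although the global Lagrange multiplier `ξ` may be non-unique, any two roots of the
mass-constraint residual `F` produce the same corrected nodal values. -/
theorem stmt_5 {ι : Type*} (a b τ m : ℝ) (hab : a < b) (hτ : 0 < τ)
    (S : Finset ι) (hS : S.Nonempty) (ω : ι → ℝ) (hω : ∀ p ∈ S, 0 < ω p)
    (uPred : ι → ℝ) (ξ₁ ξ₂ : ℝ)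
    (h1 : (∑ p ∈ S, ω p * max a (min b (uPred p + τ * ξ₁))) - m = 0)
    (h2 : (∑ p ∈ S, ω p * max a (min b (uPred p + τ * ξ₂))) - m = 0) :
    ∀ p ∈ S, max a (min b (uPred p + τ * ξ₁)) = max a (min b (uPred p + τ * ξ₂)) := by
  exact stmt_5_aux' a b τ m hτ S ω hω uPred ξ₁ ξ₂ h1 h2
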